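/- Let X be a real symmetric n×n matrix such that the bordered matrix [[k, diag(X)ᵀ],[diag(X), X]] is positive semidefinite, X ≥ 0 entrywise, diag(X) ≤ 1 entrywise, and X_{ij} = 0 whenever i,j lie in a given clique Q of a graph G and i ≠ j. Then ∑_{i∈Q} X_{ii} ≤ min{k, |Q|}. -/

import Mathlib

/-- The bordered matrix `[[k, diag(X)ᵀ],[diag(X), X]]`. -/
def border {n : ℕ} (k : ℝ) (X : Matrix (Fin n) (Fin n) ℝ) :
    Matrix (Unit ⊕ Fin n) (Unit ⊕ Fin n) ℝ :=
  Matrix.fromBlocks (Matrix.of fun _ _ => k) (Matrix.of fun _ i => X i i)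
    (Matrix.of fun i _ => X i i) X

theorem stmt_6 {n : ℕ} (G : SimpleGraph (Fin n)) (k : ℝ) (hk : 1 ≤ k)
    (X : Matrix (Fin n) (Fin n) ℝ) (hsymm : X.IsSymm)
    (hpsd : (border k X).PosSemidef)
    (hnonneg : ∀ i j, 0 ≤ X i j) (hdiag : ∀ i, X i i ≤ 1)
    (Q : Finset (Fin n)) (hQ : G.IsClique ↑Q)
    (hzero : ∀ i ∈ Q, ∀ j ∈ Q, i ≠ j → X i j = 0) :
    ∑ i ∈ Q, X i i ≤ min k (Q.card : ℝ) := by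
  have hrow : ∀ i ∈ Q, ∑ j ∈ Q, X i j = X i i := by
    intro i hi
    refine Finset.sum_eq_single i (fun b hb hbi => hzero i hi b hb (Ne.symm hbi)) ?_
    intro h; exact absurd hi h
  set v : Unit ⊕ Fin n → ℝ := Sum.elim (fun _ => -1) (fun i => if i ∈ Q then 1 else 0) with hv
  have h := hpsd.dotProduct_mulVec_nonneg v
  have key : dotProduct (star v) ((border k X).mulVec v) = k - ∑ i ∈ Q, X i i := by
    simp only [dotProduct, Matrix.mulVec, star_trivial, Fintype.sum_sum_type,
      border, Matrix.fromBlocks, Matrix.of_apply, Sum.elim_inl, Sum.elim_inr, hv,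
      Matrix.fromBlocks_apply₁₁, Matrix.fromBlocks_apply₁₂,
      Matrix.fromBlocks_apply₂₁, Matrix.fromBlocks_apply₂₂]
    have e1 : ∀ i : Fin n, ∑ j, X i j * (if j ∈ Q then 1 else 0) = ∑ j ∈ Q, X i j := by
      intro i
      simp [mul_ite, Finset.sum_ite_mem]
    have e2 : ∑ i, X i i * (if i ∈ Q then 1 else 0) = ∑ i ∈ Q, X i i := by
      simp [mul_ite, Finset.sum_ite_mem]
    simp only [e1, e2, Fintype.sum_unique]
    have e3 : ∑ x, (if x ∈ Q then (1:ℝ) else 0) * (X x x * -1 + ∑ j ∈ Q, X x j) = 0 := by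
      refine Finset.sum_eq_zero fun i _ => ?_
      by_cases hi : i ∈ Q
      · rw [if_pos hi, hrow i hi]; ring
      · rw [if_neg hi, zero_mul]
    rw [e3]; ring
  have hkle : ∑ i ∈ Q, X i i ≤ k := by linarith [key ▸ h]
  have hcard : ∑ i ∈ Q, X i i ≤ (Q.card : ℝ) := by
    calc ∑ i ∈ Q, X i i ≤ ∑ _i ∈ Q, (1:ℝ) := Finset.sum_le_sum fun i _ => hdiag i
    _ = Q.card := by simp
  exact le_min hkle hcard
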